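/- If u solves ∂ₜu + ∂ₓ f(u) = 0 with u(t,0) = g(t) and f'(g(t)) ≠ 0, then the second spatial derivative at the boundary satisfies ∂ₓₓu(t,0) = (f'(g(t))·g''(t) - 2 f''(g(t))·g'(t)²) / f'(g(t))³. -/

import Mathlib

open Filter Topology

/-- Nonlinear ILW (second order): for ∂ₜu + ∂ₓf(u) = 0 with u(t,0) = g(t) and
f'(g(t)) ≠ 0, ∂ₓₓu(t,0) = (f'(g(t))g''(t) - 2f''(g(t))g'(t)²)/f'(g(t))³. -/
theorem stmt_5 (u : ℝ → ℝ → ℝ) (f g : ℝ → ℝ)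
    (hf : ContDiff ℝ 2 f) (hg : Differentiable ℝ g) (hg' : Differentiable ℝ (deriv g))
    (hne : ∀ t > 0, deriv f (g t) ≠ 0)
    (hsmooth : ∀ t > 0, ContDiffAt ℝ 2 (fun p : ℝ × ℝ => u p.1 p.2) (t, 0))
    (hpde : ∀ t > 0, ∀ x : ℝ,
      deriv (fun s => u s x) t + deriv f (u t x) * deriv (fun y => u t y) x = 0)
    (hbc : ∀ t > 0, u t 0 = g t) :
    ∀ t > 0, iteratedDeriv 2 (fun y => u t y) 0
      = (deriv f (g t) * iteratedDeriv 2 g t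
          - 2 * iteratedDeriv 2 f (g t) * (deriv g t)^2) / (deriv f (g t))^3 := by
  have hfd : Differentiable ℝ (deriv f) := by
    have h2 : ContDiff ℝ (1 + 1) f := by norm_num; exact hf
    exact ((contDiff_succ_iff_deriv.mp h2).2.2).differentiable one_ne_zero
  intro t ht
  set F : ℝ × ℝ → ℝ := fun p => u p.1 p.2 with hFdef
  have hFt : ContDiffAt ℝ 2 F (t, 0) := hsmooth t ht
  have hEv : ∀ᶠ p in 𝓝 ((t, 0) : ℝ × ℝ), ContDiffAt ℝ 2 F p := hFt.eventually (by simp)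
  have hB : DifferentiableAt ℝ (fderiv ℝ F) (t, 0) :=
    (hFt.fderiv_right (m := 1) (by norm_num)).differentiableAt one_ne_zero
  have hsym := hFt.isSymmSndFDerivAt (by simp [minSmoothness_of_isRCLikeNormedField])
  -- derivative of s ↦ fderiv F (s,0) applied to (0,1)
  have hq : HasDerivAt (fun s => fderiv ℝ F (s, 0)) (fderiv ℝ (fderiv ℝ F) (t,0) (1, 0)) t :=
    hB.hasFDerivAt.comp_hasDerivAt t ((hasDerivAt_id t).prodMk (hasDerivAt_const t 0))
  have hqa : HasDerivAt (fun s => fderiv ℝ F (s, 0) (0, 1))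
      (fderiv ℝ (fderiv ℝ F) (t,0) (1, 0) (0, 1)) t :=
    (ContinuousLinearMap.apply ℝ ℝ ((0, 1) : ℝ × ℝ)).hasFDerivAt.comp_hasDerivAt t hq
  -- derivative of x ↦ fderiv F (t,x)
  have hr : HasDerivAt (fun x => fderiv ℝ F (t, x)) (fderiv ℝ (fderiv ℝ F) (t,0) (0, 1)) 0 :=
    hB.hasFDerivAt.comp_hasDerivAt 0 ((hasDerivAt_const 0 t).prodMk (hasDerivAt_id 0))
  have hra : HasDerivAt (fun x => fderiv ℝ F (t, x) (1, 0))
      (fderiv ℝ (fderiv ℝ F) (t,0) (0, 1) (1, 0)) 0 :=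
    (ContinuousLinearMap.apply ℝ ℝ ((1, 0) : ℝ × ℝ)).hasFDerivAt.comp_hasDerivAt 0 hr
  have hwa : HasDerivAt (fun x => fderiv ℝ F (t, x) (0, 1))
      (fderiv ℝ (fderiv ℝ F) (t,0) (0, 1) (0, 1)) 0 :=
    (ContinuousLinearMap.apply ℝ ℝ ((0, 1) : ℝ × ℝ)).hasFDerivAt.comp_hasDerivAt 0 hr
  -- eventual smoothness along lines
  have hEvt : ∀ᶠ s in 𝓝 t, ContDiffAt ℝ 2 F (s, 0) := by
    have hc : Tendsto (fun s : ℝ => ((s, 0) : ℝ × ℝ)) (𝓝 t) (𝓝 (t, 0)) :=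
      (continuous_id.prodMk continuous_const).continuousAt
    exact hc.eventually hEv
  have hEvx : ∀ᶠ x in 𝓝 (0:ℝ), ContDiffAt ℝ 2 F (t, x) := by
    have hc : Tendsto (fun x : ℝ => ((t, x) : ℝ × ℝ)) (𝓝 0) (𝓝 (t, 0)) :=
      (continuous_const.prodMk continuous_id).continuousAt
    exact hc.eventually hEv
  -- t-line: the first-order ILW relation, eventually in s
  have hkey : (fun s => fderiv ℝ F (s, 0) (0, 1)) =ᶠ[𝓝 t]
      (fun s => -deriv g s / deriv f (g s)) := by
    filter_upwards [hEvt, eventually_gt_nhds ht] with s hs hs0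
    have hdF : DifferentiableAt ℝ F (s, 0) := hs.differentiableAt two_ne_zero
    have hws : HasDerivAt (fun y => u s y) (fderiv ℝ F (s, 0) (0, 1)) 0 :=
      hdF.hasFDerivAt.comp_hasDerivAt 0 ((hasDerivAt_const 0 s).prodMk (hasDerivAt_id 0))
    have hbg : deriv (fun τ => u τ 0) s = deriv g s := by
      apply Filter.EventuallyEq.deriv_eq
      filter_upwards [eventually_gt_nhds hs0] with τ hτ
      exact hbc τ hτ
    have hp := hpde s hs0 0
    rw [hbg, hbc s hs0, hws.deriv] at hp
    rw [eq_div_iff (hne s hs0)]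
    linear_combination hp
  -- derivative of the RHS of hkey
  have hden : HasDerivAt (fun s => deriv f (g s)) (deriv (deriv f) (g t) * deriv g t) t :=
    ((hfd (g t)).hasDerivAt).comp t (hg t).hasDerivAt
  have hD1 : HasDerivAt (fun s => -deriv g s / deriv f (g s))
      ((-(deriv (deriv g) t) * deriv f (g t) - (-deriv g t) *
        (deriv (deriv f) (g t) * deriv g t)) / deriv f (g t) ^ 2) t :=
    ((hg' t).hasDerivAt).neg.div hden (hne t ht)
  have eq1 : fderiv ℝ (fderiv ℝ F) (t,0) (1, 0) (0, 1)
      = (-(deriv (deriv g) t) * deriv f (g t) - (-deriv g t) *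
        (deriv (deriv f) (g t) * deriv g t)) / deriv f (g t) ^ 2 :=
    hqa.unique (hD1.congr_of_eventuallyEq hkey)
  -- value of u_x(t,0)
  have hdF0 : DifferentiableAt ℝ F (t, 0) := hFt.differentiableAt two_ne_zero
  have hw0 : HasDerivAt (fun y => u t y) (fderiv ℝ F (t, 0) (0, 1)) 0 :=
    hdF0.hasFDerivAt.comp_hasDerivAt 0 ((hasDerivAt_const 0 t).prodMk (hasDerivAt_id 0))
  have hpval : fderiv ℝ F (t, 0) (0, 1) = -deriv g t / deriv f (g t) := hkey.self_of_nhds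
  -- x-line eventual equalities
  have hkx1 : (fun x => fderiv ℝ F (t, x) (0, 1)) =ᶠ[𝓝 (0:ℝ)]
      (fun x => deriv (fun y => u t y) x) := by
    filter_upwards [hEvx] with x hx
    have hdF : DifferentiableAt ℝ F (t, x) := hx.differentiableAt two_ne_zero
    exact (hdF.hasFDerivAt.comp_hasDerivAt x
      ((hasDerivAt_const x t).prodMk (hasDerivAt_id x))).deriv.symm
  have hkx2 : (fun x => fderiv ℝ F (t, x) (1, 0)) =ᶠ[𝓝 (0:ℝ)]
      (fun x => -(deriv f (u t x) * deriv (fun y => u t y) x)) := by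
    filter_upwards [hEvx] with x hx
    have hdF : DifferentiableAt ℝ F (t, x) := hx.differentiableAt two_ne_zero
    have hts : HasDerivAt (fun s => u s x) (fderiv ℝ F (t, x) (1, 0)) t :=
      (hdF.hasFDerivAt.comp_hasDerivAt t ((hasDerivAt_id t).prodMk (hasDerivAt_const t x)) :)
    have hp := hpde t ht x
    rw [hts.deriv] at hp
    linarith [hp]
  -- derivative of x ↦ u_x(t,x) at 0
  have hdw : HasDerivAt (fun x => deriv (fun y => u t y) x)
      (fderiv ℝ (fderiv ℝ F) (t,0) (0, 1) (0, 1)) 0 :=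
    hwa.congr_of_eventuallyEq hkx1.symm
  have hfu : HasDerivAt (fun x => deriv f (u t x))
      (deriv (deriv f) (u t 0) * fderiv ℝ F (t, 0) (0, 1)) 0 :=
    ((hfd (u t 0)).hasDerivAt).comp 0 hw0
  have hR2 : HasDerivAt (fun x => -(deriv f (u t x) * deriv (fun y => u t y) x))
      (-(deriv (deriv f) (u t 0) * fderiv ℝ F (t, 0) (0, 1) * deriv (fun y => u t y) 0
        + deriv f (u t 0) * fderiv ℝ (fderiv ℝ F) (t,0) (0, 1) (0, 1))) 0 :=
    (hfu.mul hdw).neg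
  have eq2 : fderiv ℝ (fderiv ℝ F) (t,0) (0, 1) (1, 0)
      = -(deriv (deriv f) (u t 0) * fderiv ℝ F (t, 0) (0, 1) * deriv (fun y => u t y) 0
        + deriv f (u t 0) * fderiv ℝ (fderiv ℝ F) (t,0) (0, 1) (0, 1)) :=
    hra.unique (hR2.congr_of_eventuallyEq hkx2)
  -- assemble
  have hsym' := hsym (1, 0) (0, 1)
  rw [eq1, eq2, hbc t ht, hpval, hw0.deriv, hpval] at hsym'
  have hW : iteratedDeriv 2 (fun y => u t y) 0
      = fderiv ℝ (fderiv ℝ F) (t,0) (0, 1) (0, 1) := by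
    rw [show (2:ℕ) = 1 + 1 from rfl, iteratedDeriv_succ, iteratedDeriv_one]
    exact hdw.deriv
  rw [hW]
  simp only [show (2:ℕ) = 1 + 1 from rfl, iteratedDeriv_succ, iteratedDeriv_one, iteratedDeriv_zero]
  have ha := hne t ht
  rw [eq_div_iff (pow_ne_zero 3 ha)]
  apply mul_right_cancel₀ ha
  apply mul_right_cancel₀ ha
  field_simp at hsym'
  linear_combination (deriv f (g t))^2 * hsym'
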